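/- (Rodrigues formula.) Let μ > −1/2 be real, λ ∈ ℂ, n ∈ ℕ. Define g_0 : ℝ → ℂ by g_0(x) = exp(−λ²x²) and inductively g_{j+1} = D_μ g_j on ℝ∖{0}. Then for every x ≠ 0, (−1)^n exp(λ²x²) g_n(x) = λ^n (γ_μ(n)/n!) H_n^μ(λx). -/

import Mathlib

open MeasureTheory
open scoped BigOperators Nat

/-- Generalized factorial `γ_μ(n)`: `γ_μ(0) = 1`,
`γ_μ(n+1) = (n + 1 + 2μ θ_{n+1}) γ_μ(n)` where `θ_k = 1` if `k` is odd, `0` if even. -/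
noncomputable def genGamma (μ : ℝ) : ℕ → ℝ
  | 0 => 1
  | n + 1 => ((n : ℝ) + 1 + 2 * μ * (if (n + 1) % 2 = 1 then (1 : ℝ) else 0)) * genGamma μ n

/-- Generalized exponential function `e_μ(z) = Σ_{n≥0} z^n / γ_μ(n)`. -/
noncomputable def genExp (μ : ℝ) (z : ℂ) : ℂ :=
  ∑' n : ℕ, z ^ n / (genGamma μ n : ℂ)

/-- Generalized Hermite polynomial
`H_n^μ(x) = n! Σ_{k=0}^{⌊n/2⌋} (-1)^k (2x)^{n-2k} / (k! γ_μ(n-2k))`. -/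
noncomputable def genHermite (μ : ℝ) (n : ℕ) (x : ℂ) : ℂ :=
  (n ! : ℂ) * ∑ k ∈ Finset.range (n / 2 + 1),
    (-1) ^ k * (2 * x) ^ (n - 2 * k) / ((k ! : ℂ) * ((genGamma μ (n - 2 * k) : ℝ) : ℂ))

/-- Dunkl operator `(D_μ f)(x) = f'(x) + (μ/x)(f(x) - f(-x))`. -/
noncomputable def dunkl (μ : ℝ) (f : ℝ → ℂ) (x : ℝ) : ℂ :=
  deriv f x + ((μ / x : ℝ) : ℂ) * (f x - f (-x))

/-- Euler beta function `B(a,b) = Γ(a)Γ(b)/Γ(a+b)`. -/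
noncomputable def realBeta (a b : ℝ) : ℝ :=
  Real.Gamma a * Real.Gamma b / Real.Gamma (a + b)

lemma genGamma_succ (μ : ℝ) (n : ℕ) :
    genGamma μ (n + 1)
      = ((n : ℝ) + 1 + 2 * μ * (if (n + 1) % 2 = 1 then (1 : ℝ) else 0)) * genGamma μ n := rfl

lemma genGamma_pos (μ : ℝ) (hμ : -(1/2) < μ) (n : ℕ) : 0 < genGamma μ n := by
  induction n with
  | zero => norm_num [genGamma]
  | succ n ih =>
    rw [genGamma_succ]
    refine mul_pos ?_ ih
    split_ifs with h
    · nlinarith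
    · simp only [mul_zero, add_zero]; positivity

noncomputable def dcoef (μ : ℝ) (m : ℕ) : ℂ :=
  (m : ℂ) + 2 * (μ : ℂ) * (if m % 2 = 1 then 1 else 0)

lemma GG_succ (μ : ℝ) (n : ℕ) :
    ((genGamma μ (n + 1) : ℝ) : ℂ) = dcoef μ (n + 1) * ((genGamma μ n : ℝ) : ℂ) := by
  rw [genGamma_succ, dcoef]
  push_cast
  split_ifs <;> norm_num <;> ring

noncomputable def rcoef (μ : ℝ) (lam : ℂ) (n k : ℕ) : ℂ :=
  if 2 * k ≤ n then
    (-1) ^ (n + k) * lam ^ (2 * (n - k)) * 2 ^ (n - 2 * k) *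
      ((genGamma μ n : ℝ) : ℂ) / ((k ! : ℂ) * ((genGamma μ (n - 2 * k) : ℝ) : ℂ))
  else 0

noncomputable def Qp (μ : ℝ) (lam : ℂ) (n : ℕ) (x : ℝ) : ℂ :=
  ∑ k ∈ Finset.range (n + 2), rcoef μ lam n k * (x : ℂ) ^ (n - 2 * k)

lemma GGne (μ : ℝ) (hμ : -(1/2) < μ) (n : ℕ) : ((genGamma μ n : ℝ) : ℂ) ≠ 0 := by
  exact_mod_cast (genGamma_pos μ hμ n).ne'

lemma factne (i : ℕ) : ((i ! : ℕ) : ℂ) ≠ 0 := Nat.cast_ne_zero.2 (Nat.factorial_ne_zero i)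

lemma rcoef_of_gt (μ : ℝ) (lam : ℂ) {n k : ℕ} (h : n < 2*k) : rcoef μ lam n k = 0 :=
  if_neg (by omega)

lemma dcoef_zero (μ : ℝ) : dcoef μ 0 = 0 := by norm_num [dcoef]

lemma term_id (μ : ℝ) (hμ : -(1/2) < μ) (lam : ℂ) (n i : ℕ) (z : ℂ) :
    rcoef μ lam n i * dcoef μ (n - 2*i) * z ^ (n - 2*i - 1)
      - 2 * lam^2 * z * (rcoef μ lam n (i+1) * z ^ (n - 2*(i+1)))
    = rcoef μ lam (n+1) (i+1) * z ^ (n + 1 - 2*(i+1)) := by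
  have h2μ : (1:ℝ) + 2*μ > 0 := by nlinarith
  rcases le_or_gt (2*(i+1)) n with h | h
  · obtain ⟨s, rfl⟩ : ∃ s, n = s + 2*i + 2 := ⟨n - (2*i+2), by omega⟩
    rw [show rcoef μ lam (s+2*i+2) i = _ from if_pos (by omega),
        show rcoef μ lam (s+2*i+2) (i+1) = _ from if_pos (by omega),
        show rcoef μ lam (s+2*i+2+1) (i+1) = _ from if_pos (by omega)]
    simp only [show s+2*i+2 - 2*i = s+2 from by omega,
      show s+2*i+2 - 2*i - 1 = s+1 from by omega,
      show s+2*i+2 - 2*(i+1) = s from by omega,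
      show s+2*i+2+1 - 2*(i+1) = s+1 from by omega,
      show s+2*i+2 - i = s+i+2 from by omega,
      show s+2*i+2 - (i+1) = s+i+1 from by omega,
      show s+2*i+2+1 - (i+1) = s+i+2 from by omega,
      show s+2-1 = s+1 from by omega]
    rw [show s+2*i+2+i = (s+i)+2*(i+1) from by omega,
        show s+2*i+2+(i+1) = (s+i+1)+2*(i+1) from by omega,
        show s+2*i+2+1+(i+1) = (s+i)+2*(i+2) from by omega,
        show 2*(s+i+2) = 2*(s+i+1)+2 from by omega]
    simp only [pow_add, pow_mul, neg_one_sq, one_pow, pow_one]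
    have G1 : ((genGamma μ (s+1) : ℝ) : ℂ) = dcoef μ (s+1) * ((genGamma μ s : ℝ) : ℂ) :=
      GG_succ μ s
    have G2 : ((genGamma μ (s+2) : ℝ) : ℂ)
        = dcoef μ (s+2) * (dcoef μ (s+1) * ((genGamma μ s : ℝ) : ℂ)) := by
      rw [show s+2 = (s+1)+1 from by omega, GG_succ, GG_succ]
    have G3 : ((genGamma μ (s+2*i+2+1) : ℝ) : ℂ)
        = dcoef μ (s+2*i+3) * ((genGamma μ (s+2*i+2) : ℝ) : ℂ) := by
      rw [GG_succ, show s+2*i+2+1 = s+2*i+3 from by omega]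
    rw [G2, G3, G1, Nat.factorial_succ]
    have hA : ((genGamma μ s : ℝ) : ℂ) ≠ 0 := GGne μ hμ s
    have hG : ((genGamma μ (s+2*i+2) : ℝ) : ℂ) ≠ 0 := GGne μ hμ _
    have hfi := factne i
    have hi1 : ((i:ℂ) + 1) ≠ 0 := Nat.cast_add_one_ne_zero i
    have hμ2 : ∀ c : ℕ, ((c:ℂ) + 1 + 2*(μ:ℂ)) ≠ 0 := by
      intro c
      have h0 : ((c:ℝ) + 1 + 2*μ) ≠ 0 := by nlinarith [Nat.cast_nonneg (α := ℝ) c]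
      have := Complex.ofReal_ne_zero.mpr h0
      push_cast at this
      exact this
    have hc1 : ∀ c : ℕ, ((c:ℂ) + 1) ≠ 0 := fun c => Nat.cast_add_one_ne_zero c
    have hs2 : ((s:ℂ)+2) ≠ 0 := by
      have : ((s+2:ℕ):ℂ) ≠ 0 := Nat.cast_ne_zero.2 (by omega)
      push_cast at this; exact this
    have hs1 : ((s:ℂ)+1) ≠ 0 := hc1 s
    rcases Nat.mod_two_eq_zero_or_one s with hs | hs
    · simp only [dcoef, if_pos (show (s+1)%2 = 1 from by omega),
        if_neg (show ¬ (s+2)%2 = 1 from by omega),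
        if_pos (show (s+2*i+3)%2 = 1 from by omega)]
      rw [show ((s+1:ℕ):ℂ) + 2*(μ:ℂ)*1 = (s:ℂ)+1+2*(μ:ℂ) from by push_cast; ring,
        show ((s+2:ℕ):ℂ) + 2*(μ:ℂ)*0 = (s:ℂ)+2 from by push_cast; ring,
        show ((s+2*i+3:ℕ):ℂ) + 2*(μ:ℂ)*1 = (s:ℂ)+2*(i:ℂ)+3+2*(μ:ℂ) from by push_cast; ring]
      have hd1 : ((s:ℂ)+1+2*(μ:ℂ)) ≠ 0 := hμ2 s
      simp only [Nat.cast_mul, Nat.cast_add, Nat.cast_one]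
      set S := ((s:ℕ):ℂ) with hS
      set I2 := ((i:ℕ):ℂ) with hI2
      set M := ((μ:ℝ):ℂ) with hM
      set a := ((genGamma μ s : ℝ):ℂ) with ha
      set g := ((genGamma μ (s+2*i+2) : ℝ):ℂ) with hg
      set F := ((i ! : ℕ):ℂ) with hF
      set E1 := ((-1:ℂ))^s with hE1
      set E2 := ((-1:ℂ))^i with hE2
      set P1 := (lam^2)^s with hP1
      set P2 := (lam^2)^i with hP2
      set T := ((2:ℂ))^s with hT
      set Z := z^s with hZ
      have hD1 : F * ((S+2) * ((S+1+2*M) * a)) ≠ 0 :=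
        mul_ne_zero hfi (mul_ne_zero hs2 (mul_ne_zero hd1 hA))
      have hD2 : (I2+1) * F * a ≠ 0 := mul_ne_zero (mul_ne_zero hi1 hfi) hA
      have hD3 : (I2+1) * F * ((S+1+2*M) * a) ≠ 0 :=
        mul_ne_zero (mul_ne_zero hi1 hfi) (mul_ne_zero hd1 hA)
      rw [div_mul_eq_mul_div, div_mul_eq_mul_div, div_mul_eq_mul_div, div_mul_eq_mul_div,
        mul_div_assoc', div_sub_div _ _ hD1 hD2, div_eq_div_iff (mul_ne_zero hD1 hD2) hD3]
      ring
    · simp only [dcoef, if_neg (show ¬ (s+1)%2 = 1 from by omega),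
        if_pos (show (s+2)%2 = 1 from by omega),
        if_neg (show ¬ (s+2*i+3)%2 = 1 from by omega)]
      rw [show ((s+1:ℕ):ℂ) + 2*(μ:ℂ)*0 = (s:ℂ)+1 from by push_cast; ring,
        show ((s+2:ℕ):ℂ) + 2*(μ:ℂ)*1 = (s:ℂ)+2+2*(μ:ℂ) from by push_cast; ring,
        show ((s+2*i+3:ℕ):ℂ) + 2*(μ:ℂ)*0 = (s:ℂ)+2*(i:ℂ)+3 from by push_cast; ring]
      have hd2 : ((s:ℂ)+2+2*(μ:ℂ)) ≠ 0 := by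
        have := hμ2 (s+1); push_cast at this
        intro hh; apply this; rw [← hh]; ring
      simp only [Nat.cast_mul, Nat.cast_add, Nat.cast_one]
      set S := ((s:ℕ):ℂ) with hS
      set I2 := ((i:ℕ):ℂ) with hI2
      set M := ((μ:ℝ):ℂ) with hM
      set a := ((genGamma μ s : ℝ):ℂ) with ha
      set g := ((genGamma μ (s+2*i+2) : ℝ):ℂ) with hg
      set F := ((i ! : ℕ):ℂ) with hF
      set E1 := ((-1:ℂ))^s with hE1
      set E2 := ((-1:ℂ))^i with hE2
      set P1 := (lam^2)^s with hP1
      set P2 := (lam^2)^i with hP2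
      set T := ((2:ℂ))^s with hT
      set Z := z^s with hZ
      have hD1 : F * ((S+2+2*M) * ((S+1) * a)) ≠ 0 :=
        mul_ne_zero hfi (mul_ne_zero hd2 (mul_ne_zero hs1 hA))
      have hD2 : (I2+1) * F * a ≠ 0 := mul_ne_zero (mul_ne_zero hi1 hfi) hA
      have hD3 : (I2+1) * F * ((S+1) * a) ≠ 0 :=
        mul_ne_zero (mul_ne_zero hi1 hfi) (mul_ne_zero hs1 hA)
      rw [div_mul_eq_mul_div, div_mul_eq_mul_div, div_mul_eq_mul_div, div_mul_eq_mul_div,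
        mul_div_assoc', div_sub_div _ _ hD1 hD2, div_eq_div_iff (mul_ne_zero hD1 hD2) hD3]
      ring
  · rcases eq_or_lt_of_le (Nat.succ_le_of_lt h) with h1 | h1
    · -- n + 1 = 2*(i+1), i.e. n = 2*i+1
      obtain rfl : n = 2*i+1 := by omega
      rw [rcoef_of_gt μ lam (by omega : 2*i+1 < 2*(i+1))]
      rw [show rcoef μ lam (2*i+1) i = _ from if_pos (by omega),
          show rcoef μ lam (2*i+1+1) (i+1) = _ from if_pos (by omega)]
      simp only [show 2*i+1 - 2*(i+1) = 0 from by omega,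
        show 2*i+1+1 - 2*(i+1) = 0 from by omega,
        show 2*i+1 - 2*i = 1 from by omega,
        show 2*i+1 - 2*i - 1 = 0 from by omega,
        show 2*i+1 - i = i+1 from by omega,
        show 2*i+1+1 - (i+1) = i+1 from by omega]
      have g1 : ((genGamma μ 1 : ℝ) : ℂ) = 1 + 2*μ := by
        show ((genGamma μ (0+1) : ℝ) : ℂ) = _
        rw [genGamma_succ]; norm_num [genGamma]
      have g0 : ((genGamma μ 0 : ℝ) : ℂ) = 1 := by norm_num [genGamma]
      have g2 : ((genGamma μ (2*i+1+1) : ℝ) : ℂ)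
          = (2*(i:ℂ)+2) * ((genGamma μ (2*i+1) : ℝ) : ℂ) := by
        rw [GG_succ, dcoef, if_neg (by omega)]
        push_cast; ring
      rw [g1, g0, g2, dcoef, if_pos (by omega : 1 % 2 = 1), Nat.factorial_succ]
      have hne : (1:ℂ) + 2*(μ:ℂ) ≠ 0 := by
        have : ((1 + 2*μ : ℝ) : ℂ) ≠ 0 := by exact_mod_cast h2μ.ne'
        push_cast at this; convert this using 1
      have hfi := factne i
      have hfi1 : ((i:ℂ) + 1) ≠ 0 := Nat.cast_add_one_ne_zero i
      push_cast
      field_simp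
      ring
    · -- 2*(i+1) > n+1, i.e. n ≤ 2*i
      rcases eq_or_lt_of_le (show n ≤ 2*i by omega) with h2 | h2
      · obtain rfl : n = 2*i := by omega
        rw [show 2*i - 2*i = 0 from by omega, dcoef_zero,
          rcoef_of_gt μ lam (show 2*i < 2*(i+1) by omega),
          rcoef_of_gt μ lam (show 2*i+1 < 2*(i+1) by omega)]
        ring
      · rw [rcoef_of_gt μ lam (show n < 2*(i+1) by omega),
          rcoef_of_gt μ lam (show n < 2*i by omega),
          rcoef_of_gt μ lam (show n+1 < 2*(i+1) by omega)]
        ring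

lemma rcoef_zero (μ : ℝ) (hμ : -(1/2) < μ) (lam : ℂ) (n : ℕ) :
    rcoef μ lam n 0 = (-1)^n * lam^(2*n) * 2^n := by
  rw [rcoef, if_pos (by omega)]
  simp only [Nat.sub_zero, Nat.mul_zero, Nat.factorial_zero, Nat.cast_one, one_mul, Nat.add_zero]
  rw [mul_div_assoc, div_self (GGne μ hμ n), mul_one]

lemma rc0 (μ : ℝ) (hμ : -(1/2) < μ) (lam : ℂ) (n : ℕ) :
    rcoef μ lam (n+1) 0 = -(2*lam^2) * rcoef μ lam n 0 := by
  rw [rcoef_zero μ hμ, rcoef_zero μ hμ, show 2*(n+1) = 2*n+2 from by ring]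
  rw [pow_add, pow_succ, pow_succ]
  ring

lemma mono_id (μ : ℝ) (z : ℂ) (hz : z ≠ 0) (c : ℂ) (m : ℕ) :
    c * (m:ℂ) * z^(m-1) + (μ:ℂ)/z * (c * z^m - c * (-z)^m)
      = c * dcoef μ m * z^(m-1) := by
  cases m with
  | zero => simp [dcoef]
  | succ s =>
    rcases Nat.even_or_odd (s+1) with he | ho
    · have h2 : (-z)^(s+1) = z^(s+1) := he.neg_pow z
      rw [Nat.even_iff] at he
      rw [h2, dcoef, if_neg (by omega : ¬ (s+1) % 2 = 1)]
      ring
    · have h2 : (-z)^(s+1) = -z^(s+1) := ho.neg_pow z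
      rw [Nat.odd_iff] at ho
      rw [h2, dcoef, if_pos (by omega : (s+1) % 2 = 1)]
      have hp : z^(s+1) = z * z^s := by rw [pow_succ]; ring
      rw [Nat.add_sub_cancel, hp]
      field_simp
      ring

lemma sum_id (μ : ℝ) (hμ : -(1/2) < μ) (lam : ℂ) (n : ℕ) (z : ℂ) (hz : z ≠ 0) :
    (∑ k ∈ Finset.range (n+2), rcoef μ lam n k * ((n-2*k : ℕ):ℂ) * z^(n-2*k-1))
      + (μ:ℂ)/z * ((∑ k ∈ Finset.range (n+2), rcoef μ lam n k * z^(n-2*k))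
          - ∑ k ∈ Finset.range (n+2), rcoef μ lam n k * (-z)^(n-2*k))
      - 2*lam^2*z*(∑ k ∈ Finset.range (n+2), rcoef μ lam n k * z^(n-2*k))
    = ∑ k ∈ Finset.range (n+3), rcoef μ lam (n+1) k * z^(n+1-2*k) := by
  have hG2 : (2*lam^2*z*(rcoef μ lam n (n+2) * z^(n-2*(n+2)))) = 0 := by
    rw [rcoef_of_gt μ lam (by omega)]; ring
  calc (∑ k ∈ Finset.range (n+2), rcoef μ lam n k * ((n-2*k : ℕ):ℂ) * z^(n-2*k-1))
      + (μ:ℂ)/z * ((∑ k ∈ Finset.range (n+2), rcoef μ lam n k * z^(n-2*k))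
          - ∑ k ∈ Finset.range (n+2), rcoef μ lam n k * (-z)^(n-2*k))
      - 2*lam^2*z*(∑ k ∈ Finset.range (n+2), rcoef μ lam n k * z^(n-2*k))
      = (∑ k ∈ Finset.range (n+2), rcoef μ lam n k * dcoef μ (n-2*k) * z^(n-2*k-1))
        - ∑ k ∈ Finset.range (n+2), 2*lam^2*z*(rcoef μ lam n k * z^(n-2*k)) := by
        rw [← Finset.sum_sub_distrib, Finset.mul_sum, Finset.mul_sum, ← Finset.sum_add_distrib]
        congr 1
        exact Finset.sum_congr rfl fun k _ => mono_id μ z hz (rcoef μ lam n k) (n-2*k)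
    _ = ∑ k ∈ Finset.range (n+3), rcoef μ lam (n+1) k * z^(n+1-2*k) := by
        rw [Finset.sum_range_succ' (fun k => rcoef μ lam (n+1) k * z^(n+1-2*k)) (n+2)]
        beta_reduce
        have hc : (∑ k ∈ Finset.range (n+2),
            rcoef μ lam (n+1) (k+1) * z^(n+1-2*(k+1)))
          = ∑ k ∈ Finset.range (n+2),
            (rcoef μ lam n k * dcoef μ (n-2*k) * z^(n-2*k-1)
              - 2*lam^2*z*(rcoef μ lam n (k+1) * z^(n-2*(k+1)))) :=
          Finset.sum_congr rfl fun k _ => (term_id μ hμ lam n k z).symm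
        rw [hc, Finset.sum_sub_distrib]
        have e1 : ∑ k ∈ Finset.range (n+2), 2*lam^2*z*(rcoef μ lam n (k+1) * z^(n-2*(k+1)))
            = (∑ k ∈ Finset.range (n+2), 2*lam^2*z*(rcoef μ lam n k * z^(n-2*k)))
              + (2*lam^2*z*(rcoef μ lam n (n+2) * z^(n-2*(n+2))))
              - 2*lam^2*z*(rcoef μ lam n 0 * z^(n-2*0)) := by
          have h3 := Finset.sum_range_succ'
            (fun k => 2*lam^2*z*(rcoef μ lam n k * z^(n-2*k))) (n+2)
          have h4 := Finset.sum_range_succ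
            (fun k => 2*lam^2*z*(rcoef μ lam n k * z^(n-2*k))) (n+2)
          rw [h4] at h3
          beta_reduce at h3
          linear_combination -h3
        rw [e1, hG2]
        have e0 : rcoef μ lam (n+1) 0 * z^(n+1-2*0)
            = -(2*lam^2*z*(rcoef μ lam n 0 * z^(n-2*0))) := by
          rw [rc0 μ hμ lam n]
          simp only [Nat.sub_zero, Nat.mul_zero]
          rw [pow_succ]
          ring
        rw [e0]
        ring

lemma hasDerivAt_Qp (μ : ℝ) (lam : ℂ) (n : ℕ) (x : ℝ) :
    HasDerivAt (fun y : ℝ => Qp μ lam n y)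
      (∑ k ∈ Finset.range (n+2), rcoef μ lam n k * ((n-2*k : ℕ):ℂ) * (x:ℂ)^(n-2*k-1)) x := by
  unfold Qp
  apply HasDerivAt.fun_sum
  intro k _
  simpa [mul_assoc] using
    ((hasDerivAt_pow (n-2*k) (x:ℂ)).comp_ofReal).const_mul (rcoef μ lam n k)

lemma hasDerivAt_E (lam : ℂ) (x : ℝ) :
    HasDerivAt (fun y : ℝ => Complex.exp (-(lam^2) * (y:ℂ)^2))
      (Complex.exp (-(lam^2) * (x:ℂ)^2) * (-(lam^2) * (2*(x:ℂ)))) x := by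
  have h1 : HasDerivAt (fun w : ℂ => -(lam^2) * w^2) (-(lam^2) * (2*(x:ℂ))) (x:ℂ) := by
    simpa using (hasDerivAt_pow 2 (x:ℂ)).const_mul (-(lam^2))
  exact (h1.comp_ofReal).cexp

lemma dunkl_congr (μ : ℝ) {f g : ℝ → ℂ} {x : ℝ}
    (h : ∀ y : ℝ, y ≠ 0 → f y = g y) (hx : x ≠ 0) : dunkl μ f x = dunkl μ g x := by
  have hev : f =ᶠ[nhds x] g := by
    filter_upwards [isOpen_compl_singleton.mem_nhds
      (by simpa [Set.mem_compl_iff] using hx : x ∈ ({0}ᶜ : Set ℝ))] with y hy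
    exact h y (by simpa using hy)
  rw [dunkl, dunkl, hev.deriv_eq, h x hx, h (-x) (neg_ne_zero.2 hx)]

lemma dunkl_step (μ : ℝ) (hμ : -(1/2) < μ) (lam : ℂ) (n : ℕ) (x : ℝ) (hx : x ≠ 0) :
    dunkl μ (fun y : ℝ => Qp μ lam n y * Complex.exp (-(lam^2) * (y:ℂ)^2)) x
      = Qp μ lam (n+1) x * Complex.exp (-(lam^2) * (x:ℂ)^2) := by
  have hxC : ((x:ℂ)) ≠ 0 := Complex.ofReal_ne_zero.mpr hx
  have hF := (hasDerivAt_Qp μ lam n x).mul (hasDerivAt_E lam x)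
  have key := sum_id μ hμ lam n (x:ℂ) hxC
  rw [dunkl, show (fun y : ℝ => Qp μ lam n y * Complex.exp (-(lam^2) * (y:ℂ)^2)) = (fun y : ℝ => Qp μ lam n y) * (fun y : ℝ => Complex.exp (-(lam^2) * (y:ℂ)^2)) from rfl, hF.deriv]
  show _ = Qp μ lam (n+1) x * _
  unfold Qp
  push_cast
  simp only [neg_sq, show n+1+2 = n+3 from by omega]
  linear_combination Complex.exp (-(lam^2)*(x:ℂ)^2) * key

lemma Qp_zero (μ : ℝ) (hμ : -(1/2) < μ) (lam : ℂ) (x : ℝ) : Qp μ lam 0 x = 1 := by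
  unfold Qp
  rw [Finset.sum_range_succ, Finset.sum_range_succ, Finset.sum_range_zero,
    rcoef_zero μ hμ, rcoef_of_gt μ lam (by omega)]
  norm_num

lemma iter_eq (μ : ℝ) (hμ : -(1/2) < μ) (lam : ℂ) (n : ℕ) :
    ∀ x : ℝ, x ≠ 0 →
      (dunkl μ)^[n] (fun y : ℝ => Complex.exp (-(lam^2) * (y:ℂ)^2)) x
        = Qp μ lam n x * Complex.exp (-(lam^2) * (x:ℂ)^2) := by
  induction n with
  | zero => intro x hx; simp [Qp_zero μ hμ lam x]
  | succ n ih =>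
    intro x hx
    rw [Function.iterate_succ_apply']
    rw [dunkl_congr μ ih hx]
    exact dunkl_step μ hμ lam n x hx

/-- Rodrigues formula: for `μ > -1/2`, `λ ∈ ℂ`, `n ∈ ℕ`,
with `g_0(x) = exp(-λ²x²)` and `g_{j+1} = D_μ g_j`, one has for every `x ≠ 0`:
`(-1)^n exp(λ²x²) g_n(x) = λ^n (γ_μ(n)/n!) H_n^μ(λx)`. -/
theorem genHermite_rodrigues (μ : ℝ) (hμ : -(1/2) < μ) (lam : ℂ) (n : ℕ)
    (x : ℝ) (hx : x ≠ 0) :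
    (-1) ^ n * Complex.exp (lam ^ 2 * (x : ℂ) ^ 2) *
        ((dunkl μ)^[n] (fun y : ℝ => Complex.exp (-(lam ^ 2) * (y : ℂ) ^ 2)) x)
      = lam ^ n * ((genGamma μ n : ℂ) / (n ! : ℂ)) * genHermite μ n (lam * x) := by
  rw [iter_eq μ hμ lam n x hx]
  have hcancel : Complex.exp (lam^2*(x:ℂ)^2) * Complex.exp (-(lam^2)*(x:ℂ)^2) = 1 := by
    have h0 : lam^2*(x:ℂ)^2 + -(lam^2)*(x:ℂ)^2 = 0 := by ring
    rw [← Complex.exp_add, h0, Complex.exp_zero]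
  have hQ : Qp μ lam n x = ∑ k ∈ Finset.range (n/2+1), rcoef μ lam n k * (x:ℂ)^(n-2*k) := by
    unfold Qp
    refine (Finset.sum_subset (Finset.range_subset_range.mpr (by omega)) ?_).symm
    intro k hk hnk
    simp only [Finset.mem_range] at hk hnk
    rw [rcoef_of_gt μ lam (by omega)]
    ring
  calc (-1)^n * Complex.exp (lam^2*(x:ℂ)^2) * (Qp μ lam n x * Complex.exp (-(lam^2)*(x:ℂ)^2))
      = (-1)^n * Qp μ lam n x
          * (Complex.exp (lam^2*(x:ℂ)^2) * Complex.exp (-(lam^2)*(x:ℂ)^2)) := by ring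
    _ = (-1)^n * Qp μ lam n x := by rw [hcancel, mul_one]
    _ = lam ^ n * ((genGamma μ n : ℂ) / (n ! : ℂ)) * genHermite μ n (lam * x) := by
        rw [hQ, genHermite, Finset.mul_sum, Finset.mul_sum, Finset.mul_sum]
        refine Finset.sum_congr rfl fun k hk => ?_
        simp only [Finset.mem_range] at hk
        have h2k : 2*k ≤ n := by omega
        rw [rcoef, if_pos h2k]
        have hsign : ((-1:ℂ))^n * (-1)^(n+k) = (-1)^k := by
          rw [pow_add, ← mul_assoc, ← pow_add, ← two_mul, pow_mul]
          norm_num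
        rw [show ((-1:ℂ))^n * ((-1:ℂ)^(n+k) * lam^(2*(n-k)) * 2^(n-2*k) *
              ((genGamma μ n : ℝ):ℂ) / ((k ! : ℂ) * ((genGamma μ (n-2*k) : ℝ):ℂ)) * (x:ℂ)^(n-2*k))
            = ((-1:ℂ)^n * (-1:ℂ)^(n+k)) * (lam^(2*(n-k)) * 2^(n-2*k) *
              ((genGamma μ n : ℝ):ℂ) / ((k ! : ℂ) * ((genGamma μ (n-2*k) : ℝ):ℂ)) * (x:ℂ)^(n-2*k))
          from by ring, hsign]
        have hlam : lam^(2*(n-k)) = lam^n * lam^(n-2*k) := by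
          rw [← pow_add, show n + (n-2*k) = 2*(n-k) from by omega]
        have h2 : (2*(lam*(x:ℂ)))^(n-2*k) = 2^(n-2*k) * (lam^(n-2*k) * (x:ℂ)^(n-2*k)) := by
          rw [mul_pow, mul_pow]
        rw [hlam, h2]
        field_simp [factne n, factne k, GGne μ hμ (n-2*k)]
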